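/- Let d ≥ 2 and let r, n be positive integers with r ≤ n/d. Every d-uniform hypergraph H on n vertices having no transversal of size r − 1 has at most 2^{n − rd}·(2^d − 1)^r independent sets, and equality holds if and only if H is the disjoint union of r pairwise disjoint edges together with n − rd isolated vertices. Consequently, i(n, r, d) = 2^{n − rd}·(2^d − 1)^r. -/

import Mathlib

/-- `S` is an independent set of the `d`-uniform hypergraph with edge set `E` :
no `d`-element subset of `S` is an edge. -/
def IsIndep {n : ℕ} (E : Finset (Finset (Fin n))) (d : ℕ) (S : Finset (Fin n)) : Prop :=
  ∀ T ⊆ S, T.card = d → T ∉ E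

/-- `T` is a transversal of the hypergraph with edge set `E` :
it meets every edge. -/
def IsTransversal {n : ℕ} (E : Finset (Finset (Fin n))) (T : Finset (Fin n)) : Prop :=
  ∀ e ∈ E, (e ∩ T).Nonempty

/-- The number of independent sets of the `d`-graph with edge set `E`. -/
noncomputable def numIndep {n : ℕ} (E : Finset (Finset (Fin n))) (d : ℕ) : ℕ :=
  {S : Finset (Fin n) | IsIndep E d S}.ncard

/-- `i n r d` : the maximum number of independent sets in an `n`-vertex `d`-uniform
hypergraph with no transversal of size `r-1`. -/
noncomputable def iMax (n r d : ℕ) : ℕ :=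
  sSup {m | ∃ E : Finset (Finset (Fin n)),
    (∀ e ∈ E, e.card = d) ∧
    (¬ ∃ T : Finset (Fin n), T.card = r - 1 ∧ IsTransversal E T) ∧
    numIndep E d = m}

instance {n : ℕ} (E : Finset (Finset (Fin n))) (d : ℕ) (S : Finset (Fin n)) :
    Decidable (IsIndep E d S) := by
  unfold IsIndep; infer_instance

def cnt {n : ℕ} (E : Finset (Finset (Fin n))) (d : ℕ) (R A : Finset (Fin n)) : ℕ :=
  (Finset.univ.filter (fun S => S ∩ R = A ∧ IsIndep E d S)).card

open Finset

lemma cnt_split {n : ℕ} (E : Finset (Finset (Fin n))) (d : ℕ) (R A : Finset (Fin n))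
    (v : Fin n) (hvR : v ∉ R) (hvA : v ∉ A) :
    cnt E d R A = cnt E d (insert v R) (insert v A) + cnt E d (insert v R) A := by
  classical
  unfold cnt
  rw [← Finset.card_filter_add_card_filter_not (p := fun S => v ∈ S)
    (s := Finset.univ.filter (fun S => S ∩ R = A ∧ IsIndep E d S))]
  rw [Finset.filter_filter, Finset.filter_filter]
  congr 1
  · apply Finset.card_nbij id
    · intro S hS
      simp only [Finset.mem_coe, mem_filter, mem_univ, true_and] at hS ⊢
      obtain ⟨⟨h1, h2⟩, h3⟩ := hS
      refine ⟨?_, h2⟩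
      ext x
      simp only [mem_inter, mem_insert]
      constructor
      · rintro ⟨hxS, hx | hx⟩
        · left; exact hx
        · right; rw [← h1]; exact mem_inter.2 ⟨hxS, hx⟩
      · rintro (rfl | hx)
        · exact ⟨h3, Or.inl rfl⟩
        · rw [← h1] at hx
          exact ⟨(mem_inter.1 hx).1, Or.inr (mem_inter.1 hx).2⟩
    · exact Set.injOn_id _
    · intro S hS
      simp only [Set.mem_image, Finset.coe_filter, Set.mem_setOf_eq, mem_univ, true_and] at hS ⊢
      refine ⟨S, ⟨⟨?_, hS.2⟩, ?_⟩, rfl⟩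
      · have h1 := hS.1
        ext x
        simp only [mem_inter]
        constructor
        · rintro ⟨hxS, hxR⟩
          have : x ∈ S ∩ insert v R := mem_inter.2 ⟨hxS, mem_insert_of_mem hxR⟩
          rw [h1] at this
          rcases mem_insert.1 this with rfl | h
          · exact absurd hxR hvR
          · exact h
        · intro hx
          have : x ∈ insert v A := mem_insert_of_mem hx
          rw [← h1] at this
          have hxv : x ≠ v := by rintro rfl; exact hvA hx
          rcases mem_insert.1 ((mem_inter.1 this).2) with h | h
          · exact absurd h hxv
          · exact ⟨(mem_inter.1 this).1, h⟩
      · have h1 := hS.1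
        have : v ∈ insert v A := mem_insert_self v A
        rw [← h1] at this
        exact (mem_inter.1 this).1
  · apply Finset.card_nbij id
    · intro S hS
      simp only [Finset.mem_coe, mem_filter, mem_univ, true_and] at hS ⊢
      obtain ⟨⟨h1, h2⟩, h3⟩ := hS
      refine ⟨?_, h2⟩
      ext x
      simp only [mem_inter, mem_insert]
      constructor
      · rintro ⟨hxS, hx | hx⟩
        · exact absurd hxS (by rwa [hx])
        · rw [← h1]; exact mem_inter.2 ⟨hxS, hx⟩
      · intro hx
        rw [← h1] at hx
        exact ⟨(mem_inter.1 hx).1, Or.inr (mem_inter.1 hx).2⟩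
    · exact Set.injOn_id _
    · intro S hS
      simp only [Set.mem_image, Finset.coe_filter, Set.mem_setOf_eq, mem_univ, true_and] at hS ⊢
      have h1 := hS.1
      have hvS : v ∉ S := by
        intro hv
        have : v ∈ S ∩ insert v R := mem_inter.2 ⟨hv, mem_insert_self v R⟩
        rw [h1] at this
        exact hvA this
      refine ⟨S, ⟨⟨?_, hS.2⟩, hvS⟩, rfl⟩
      ext x
      simp only [mem_inter]
      constructor
      · rintro ⟨hxS, hxR⟩
        rw [← h1]
        exact mem_inter.2 ⟨hxS, mem_insert_of_mem hxR⟩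
      · intro hx
        rw [← h1] at hx
        obtain ⟨hxS, hx2⟩ := mem_inter.1 hx
        rcases mem_insert.1 hx2 with rfl | h
        · exact absurd hxS hvS
        · exact ⟨hxS, h⟩

lemma cnt_le {n : ℕ} (E : Finset (Finset (Fin n))) (d : ℕ) (R A : Finset (Fin n)) :
    cnt E d R A ≤ 2 ^ (n - R.card) := by
  classical
  unfold cnt
  have h2 : ((Finset.univ \ R).powerset).card = 2 ^ (n - R.card) := by
    rw [card_powerset, card_sdiff_of_subset (subset_univ R), card_univ, Fintype.card_fin]
  rw [← h2]
  apply Finset.card_le_card_of_injOn (fun S => S \ R)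
  · intro S hS
    simp only [Finset.mem_coe, mem_powerset]
    exact sdiff_subset_sdiff (subset_univ S) le_rfl
  · intro S hS S' hS' h
    simp only [coe_filter, Set.mem_setOf_eq, mem_univ, true_and] at hS hS'
    have : S = S \ R ∪ A := by
      rw [← hS.1]; ext x; simp only [mem_union, mem_sdiff, mem_inter]; tauto
    have h' : S' = S' \ R ∪ A := by
      rw [← hS'.1]; ext x; simp only [mem_union, mem_sdiff, mem_inter]; tauto
    have hb : S \ R = S' \ R := h
    rw [this, h', hb]

lemma cnt_zero {n : ℕ} (E : Finset (Finset (Fin n))) (d : ℕ) (R A e : Finset (Fin n))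
    (he : e ∈ E) (hed : e.card = d) (heA : e ⊆ A) :
    cnt E d R A = 0 := by
  classical
  unfold cnt
  rw [Finset.card_eq_zero, Finset.filter_eq_empty_iff]
  rintro S -
  rintro ⟨h1, h2⟩
  exact h2 e (heA.trans (h1 ▸ inter_subset_left)) hed he

lemma inner {n : ℕ} (E : Finset (Finset (Fin n))) (d r' t : ℕ) :
    ∀ k (R A e : Finset (Fin n)), A ⊆ R → e ∈ E → e.card = d →
    Disjoint e (R \ A) → (e \ R).card = k → (R \ A).card = t →
    (∀ R' A' : Finset (Fin n), A' ⊆ R' → (R' \ A').card = t + 1 →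
      cnt E d R' A' * 2 ^ (r' * d) ≤ (2 ^ d - 1) ^ r' * 2 ^ (n - R'.card)) →
    cnt E d R A * (2 ^ (r' * d) * 2 ^ k) ≤ (2 ^ d - 1) ^ r' * ((2 ^ k - 1) * 2 ^ (n - R.card)) := by
  intro k
  induction k with
  | zero =>
    intro R A e hAR he hed hdisj hk ht hOIH
    have heA : e ⊆ A := by
      intro x hx
      have hxR : x ∈ R := by
        by_contra hxR
        have : x ∈ e \ R := Finset.mem_sdiff.2 ⟨hx, hxR⟩
        rw [Finset.card_eq_zero.1 hk] at this
        exact absurd this (Finset.notMem_empty x)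
      by_contra hxA
      exact (Finset.disjoint_left.1 hdisj) hx (Finset.mem_sdiff.2 ⟨hxR, hxA⟩)
    rw [cnt_zero E d R A e he hed heA]
    simp
  | succ k IH =>
    intro R A e hAR he hed hdisj hk ht hOIH
    have hne : (e \ R).Nonempty := by
      rw [← Finset.card_pos, hk]; omega
    obtain ⟨v, hv⟩ := hne
    have hvR : v ∉ R := (Finset.mem_sdiff.1 hv).2
    have hvA : v ∉ A := fun h => hvR (hAR h)
    have hsplit := cnt_split E d R A v hvR hvA
    -- term 1 : v ∈ S
    have hR1A1 : insert v R \ insert v A = R \ A := by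
      ext x
      simp only [Finset.mem_sdiff, Finset.mem_insert]
      constructor
      · rintro ⟨hx1, hx2⟩
        push_neg at hx2
        rcases hx1 with rfl | hx1
        · exact absurd rfl hx2.1
        · exact ⟨hx1, hx2.2⟩
      · rintro ⟨hx1, hx2⟩
        have : x ≠ v := by rintro rfl; exact hvR hx1
        exact ⟨Or.inr hx1, by push_neg; exact ⟨this, hx2⟩⟩
    have h1 : cnt E d (insert v R) (insert v A) * (2 ^ (r' * d) * 2 ^ k) ≤
        (2 ^ d - 1) ^ r' * ((2 ^ k - 1) * 2 ^ (n - (insert v R).card)) := by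
      apply IH (insert v R) (insert v A) e
        (Finset.insert_subset_insert v hAR) he hed (hR1A1 ▸ hdisj)
      · rw [show e \ insert v R = (e \ R).erase v by
          ext x; simp only [Finset.mem_sdiff, Finset.mem_erase, Finset.mem_insert]; tauto]
        rw [Finset.card_erase_of_mem hv, hk]
        omega
      · rw [hR1A1, ht]
      · exact hOIH
    -- term 2 : v ∉ S
    have hR2A : insert v R \ A = insert v (R \ A) := by
      ext x
      simp only [Finset.mem_sdiff, Finset.mem_insert]
      constructor
      · rintro ⟨rfl | hx1, hx2⟩
        · exact Or.inl rfl
        · exact Or.inr ⟨hx1, hx2⟩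
      · rintro (rfl | ⟨hx1, hx2⟩)
        · exact ⟨Or.inl rfl, hvA⟩
        · exact ⟨Or.inr hx1, hx2⟩
    have h2 : cnt E d (insert v R) A * 2 ^ (r' * d) ≤
        (2 ^ d - 1) ^ r' * 2 ^ (n - (insert v R).card) := by
      apply hOIH
      · exact hAR.trans (Finset.subset_insert v R)
      · rw [hR2A, Finset.card_insert_of_notMem (fun h => hvR (Finset.mem_sdiff.1 h).1), ht]
    -- combine
    have hcard : (insert v R).card = R.card + 1 := Finset.card_insert_of_notMem hvR
    have hRn : R.card + 1 ≤ n := by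
      have h := Finset.card_le_univ (insert v R)
      simp only [Finset.card_univ, Fintype.card_fin] at h
      omega
    have hm : n - R.card = (n - (insert v R).card) + 1 := by rw [hcard]; omega
    set c1 := cnt E d (insert v R) (insert v A)
    set c2 := cnt E d (insert v R) A
    set Q := (2 ^ d - 1) ^ r'
    set P := 2 ^ (r' * d)
    set M := 2 ^ (n - (insert v R).card)
    rw [hsplit, hm]
    obtain ⟨b, hb⟩ : ∃ b, (2:ℕ) ^ k = b + 1 :=
      ⟨2 ^ k - 1, by have := Nat.one_le_two_pow (n := k); omega⟩
    rw [pow_succ 2 (n - (insert v R).card), pow_succ 2 k]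
    rw [hb] at h1 ⊢
    have e4 : (b + 1) - 1 = b := by omega
    rw [e4] at h1
    have e3 : (b + 1) * 2 - 1 = 2 * b + 1 := by omega
    rw [e3]
    calc (c1 + c2) * (P * ((b + 1) * 2))
        = 2 * (c1 * (P * (b + 1))) + (c2 * P) * (2 * (b + 1)) := by ring
      _ ≤ 2 * (Q * (b * M)) + (Q * M) * (2 * (b + 1)) :=
          Nat.add_le_add (Nat.mul_le_mul_left 2 h1) (Nat.mul_le_mul_right _ h2)
      _ = Q * ((2 * b + 1) * (M * 2)) := by ring

lemma lemA {n : ℕ} (E : Finset (Finset (Fin n))) (d : ℕ) (hE : ∀ e ∈ E, e.card = d) :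
    ∀ r (R A : Finset (Fin n)), A ⊆ R →
    (∀ T : Finset (Fin n), T.card < (R \ A).card + r → ∃ e ∈ E, Disjoint e T) →
    cnt E d R A * 2 ^ (r * d) ≤ (2 ^ d - 1) ^ r * 2 ^ (n - R.card) := by
  intro r
  induction r with
  | zero =>
    intro R A hAR _
    simpa using cnt_le E d R A
  | succ r IH =>
    intro R A hAR Hyp
    obtain ⟨e, he, hdisj⟩ := Hyp (R \ A) (by omega)
    have hed : e.card = d := hE e he
    have key := inner E d r (R \ A).card (e \ R).card R A e hAR he hed hdisj rfl rfl
      (fun R' A' hA'R' hcard => IH R' A' hA'R'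
        (fun T hT => Hyp T (by omega)))
    set k := (e \ R).card with hk
    have hkd : k ≤ d := by
      rw [hk, ← hed]; exact Finset.card_le_card (Finset.sdiff_subset)
    have hsum : (r + 1) * d = r * d + (k + (d - k)) := by
      have : k + (d - k) = d := by omega
      rw [this]; ring
    rw [hsum, pow_add, pow_add]
    calc cnt E d R A * (2 ^ (r * d) * (2 ^ k * 2 ^ (d - k)))
        = cnt E d R A * (2 ^ (r * d) * 2 ^ k) * 2 ^ (d - k) := by ring
      _ ≤ (2 ^ d - 1) ^ r * ((2 ^ k - 1) * 2 ^ (n - R.card)) * 2 ^ (d - k) :=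
          Nat.mul_le_mul_right _ key
      _ = (2 ^ d - 1) ^ r * (((2 ^ k - 1) * 2 ^ (d - k)) * 2 ^ (n - R.card)) := by ring
      _ ≤ (2 ^ d - 1) ^ r * ((2 ^ d - 1) * 2 ^ (n - R.card)) := by
          apply Nat.mul_le_mul_left
          apply Nat.mul_le_mul_right
          have h1 : (2:ℕ) ^ k * 2 ^ (d - k) = 2 ^ d := by
            rw [← pow_add]; congr 1; omega
          have h2 : (1:ℕ) ≤ 2 ^ k := Nat.one_le_two_pow
          have h3 : (1:ℕ) ≤ 2 ^ (d - k) := Nat.one_le_two_pow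
          calc (2 ^ k - 1) * 2 ^ (d - k) = 2 ^ k * 2 ^ (d - k) - 2 ^ (d - k) := by
                rw [Nat.sub_mul, one_mul]
            _ = 2 ^ d - 2 ^ (d - k) := by rw [h1]
            _ ≤ 2 ^ d - 1 := by omega
      _ = (2 ^ d - 1) ^ (r + 1) * 2 ^ (n - R.card) := by rw [pow_succ]; ring

lemma cntC {n : ℕ} (d : ℕ) :
    ∀ (E' : Finset (Finset (Fin n))) (W : Finset (Fin n)),
    (∀ e ∈ E', e.card = d) → (∀ e ∈ E', ∀ f ∈ E', e ≠ f → Disjoint e f) →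
    (∀ e ∈ E', e ⊆ W) →
    (W.powerset.filter (fun S => ∀ e ∈ E', ¬ e ⊆ S)).card
      = (2 ^ d - 1) ^ E'.card * 2 ^ (W.card - E'.card * d) := by
  classical
  intro E'
  induction E' using Finset.induction_on with
  | empty =>
    intro W _ _ _
    simp [Finset.card_powerset]
  | @insert e E'' henotin IH =>
    intro W hunif hdisj hsub
    have heW : e ⊆ W := hsub e (Finset.mem_insert_self e E'')
    have hed : e.card = d := hunif e (Finset.mem_insert_self e E'')
    have hdisje : ∀ f ∈ E'', Disjoint e f := by
      intro f hf
      exact hdisj e (Finset.mem_insert_self e E'') f (Finset.mem_insert_of_mem hf)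
        (fun h => henotin (h ▸ hf))
    have key : (W.powerset.filter (fun S => ∀ f ∈ insert e E'', ¬ f ⊆ S)).card
        = ((e.powerset.erase e) ×ˢ ((W \ e).powerset.filter (fun S => ∀ f ∈ E'', ¬ f ⊆ S))).card := by
      apply Finset.card_bij' (fun S _ => (S ∩ e, S \ e))
        (fun p _ => p.1 ∪ p.2)
      · intro S hS
        simp only [Finset.mem_filter, Finset.mem_powerset, Finset.mem_product,
          Finset.mem_erase] at hS ⊢
        obtain ⟨hSW, hforb⟩ := hS
        refine ⟨⟨?_, Finset.inter_subset_right⟩, Finset.sdiff_subset_sdiff hSW le_rfl, ?_⟩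
        · intro h
          have heS : e ⊆ S := by
            intro x hx
            have hx2 : x ∈ S ∩ e := by rw [h]; exact hx
            exact (Finset.mem_inter.1 hx2).1
          exact hforb e (Finset.mem_insert_self e E'') heS
        · intro f hf hfsub
          apply hforb f (Finset.mem_insert_of_mem hf)
          exact hfsub.trans Finset.sdiff_subset
      · intro p hp
        simp only [Finset.mem_filter, Finset.mem_powerset, Finset.mem_product,
          Finset.mem_erase] at hp ⊢
        obtain ⟨⟨hp1ne, hp1⟩, hp2, hforb⟩ := hp
        have hdisjp : Disjoint p.2 e := Finset.sdiff_disjoint.mono_left hp2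
        constructor
        · exact Finset.union_subset (hp1.trans heW) (hp2.trans Finset.sdiff_subset)
        · intro f hf hfsub
          rcases Finset.mem_insert.1 hf with rfl | hf'
          · apply hp1ne
            apply Finset.Subset.antisymm hp1
            intro x hx
            rcases Finset.mem_union.1 (hfsub hx) with h | h
            · exact h
            · exact absurd hx (Finset.disjoint_left.1 hdisjp h)
          · apply hforb f hf'
            intro x hx
            rcases Finset.mem_union.1 (hfsub hx) with h | h
            · exact ((Finset.disjoint_left.1 (hdisje f hf') (hp1 h)) hx).elim
            · exact h
      · intro S hS
        simp only [Finset.mem_filter, Finset.mem_powerset] at hS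
        ext x
        simp only [Finset.mem_union, Finset.mem_inter, Finset.mem_sdiff]
        tauto
      · intro p hp
        simp only [Finset.mem_filter, Finset.mem_powerset, Finset.mem_product,
          Finset.mem_erase] at hp
        obtain ⟨⟨hp1ne, hp1⟩, hp2, hforb⟩ := hp
        have hdisjp : Disjoint p.2 e := Finset.sdiff_disjoint.mono_left hp2
        ext1
        · simp only
          ext x
          simp only [Finset.mem_inter, Finset.mem_union]
          constructor
          · rintro ⟨h | h, hxe⟩
            · exact h
            · exact absurd hxe (Finset.disjoint_left.1 hdisjp h)
          · intro h
            exact ⟨Or.inl h, hp1 h⟩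
        · simp only
          ext x
          simp only [Finset.mem_sdiff, Finset.mem_union]
          constructor
          · rintro ⟨h | h, hxe⟩
            · exact absurd (hp1 h) hxe
            · exact h
          · intro h
            exact ⟨Or.inr h, Finset.disjoint_left.1 hdisjp h⟩
    rw [key, Finset.card_product, Finset.card_erase_of_mem (Finset.mem_powerset_self e),
      Finset.card_powerset, hed,
      IH (W \ e) (fun f hf => hunif f (Finset.mem_insert_of_mem hf))
        (fun f hf g hg hfg => hdisj f (Finset.mem_insert_of_mem hf) g (Finset.mem_insert_of_mem hg) hfg)
        (fun f hf => Finset.subset_sdiff.2 ⟨hsub f (Finset.mem_insert_of_mem hf),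
          (hdisje f hf).symm⟩)]
    rw [Finset.card_sdiff_of_subset heW, hed, Finset.card_insert_of_notMem henotin]
    rw [pow_succ]
    have : W.card - d - E''.card * d = W.card - (E''.card + 1) * d := by
      rw [Nat.sub_sub]; congr 1; ring
    rw [this]
    ring

lemma notrans_hyp {n r : ℕ} (E : Finset (Finset (Fin n))) (hr : 1 ≤ r) (hn : r - 1 ≤ n)
    (h : ¬ ∃ T : Finset (Fin n), T.card = r - 1 ∧ IsTransversal E T) :
    ∀ T : Finset (Fin n), T.card < r → ∃ e ∈ E, Disjoint e T := by
  intro T hT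
  by_contra hc
  push_neg at hc
  apply h
  obtain ⟨T', hTT', -, hT'⟩ := Finset.exists_subsuperset_card_eq (n := r - 1)
    (Finset.subset_univ T) (by omega)
    (by rw [Finset.card_univ, Fintype.card_fin]; exact hn)
  refine ⟨T', hT', fun e he => ?_⟩
  have := hc e he
  rw [Finset.not_disjoint_iff] at this
  obtain ⟨x, hx1, hx2⟩ := this
  exact ⟨x, Finset.mem_inter.2 ⟨hx1, hTT' hx2⟩⟩

lemma notrans_card {n r d : ℕ} (E : Finset (Finset (Fin n))) (hd : 1 ≤ d) (hr : 1 ≤ r)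
    (hn : r - 1 ≤ n) (hE : ∀ e ∈ E, e.card = d)
    (h : ¬ ∃ T : Finset (Fin n), T.card = r - 1 ∧ IsTransversal E T) :
    r ≤ E.card := by
  classical
  by_contra hc
  push_neg at hc
  apply h
  have hsel : ∀ e ∈ E, e.Nonempty := by
    intro e he
    rw [← Finset.card_pos, hE e he]; omega
  set T₀ : Finset (Fin n) := E.attach.image (fun p => p.1.min' (hsel p.1 p.2)) with hT₀
  have hT₀card : T₀.card ≤ E.card := le_trans (Finset.card_image_le) (by simp)
  obtain ⟨T', hTT', -, hT'⟩ := Finset.exists_subsuperset_card_eq (n := r - 1)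
    (Finset.subset_univ T₀) (by omega)
    (by rw [Finset.card_univ, Fintype.card_fin]; exact hn)
  refine ⟨T', hT', fun e he => ?_⟩
  refine ⟨e.min' (hsel e he), Finset.mem_inter.2 ⟨Finset.min'_mem _ _, hTT' ?_⟩⟩
  rw [hT₀]
  exact Finset.mem_image.2 ⟨⟨e, he⟩, Finset.mem_attach _ _, rfl⟩

lemma disj_mul_le {n d : ℕ} (E : Finset (Finset (Fin n)))
    (hE : ∀ e ∈ E, e.card = d) (hdisj : ∀ e ∈ E, ∀ f ∈ E, e ≠ f → Disjoint e f) :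
    E.card * d ≤ n := by
  classical
  have h1 : (E.biUnion (fun e => e)).card = E.card * d := by
    rw [Finset.card_biUnion (fun e he f hf hef => hdisj e he f hf hef)]
    rw [Finset.sum_congr rfl (fun e he => hE e he), Finset.sum_const, smul_eq_mul]
  have h2 := Finset.card_le_univ (E.biUnion (fun e => e))
  rw [h1] at h2
  simpa using h2

lemma indep_iff {n d : ℕ} (E : Finset (Finset (Fin n))) (hE : ∀ e ∈ E, e.card = d)
    (S : Finset (Fin n)) : IsIndep E d S ↔ ∀ e ∈ E, ¬ e ⊆ S := by
  constructor
  · intro h e he hsub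
    exact h e hsub (hE e he) he
  · intro h T hTS hTd hTE
    exact h T hTE hTS

lemma numIndep_eq_cnt {n d : ℕ} (E : Finset (Finset (Fin n))) :
    numIndep E d = cnt E d ∅ ∅ := by
  classical
  unfold numIndep cnt
  rw [Set.ncard_eq_toFinset_card', Set.toFinset_setOf]
  congr 1
  apply Finset.filter_congr
  intro S _
  simp [Finset.inter_empty]

lemma cnt_eq_prod {n d : ℕ} (E : Finset (Finset (Fin n))) (hE : ∀ e ∈ E, e.card = d) :
    cnt E d ∅ ∅ = (Finset.univ.powerset.filter
      (fun S : Finset (Fin n) => ∀ e ∈ E, ¬ e ⊆ S)).card := by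
  classical
  unfold cnt
  rw [Finset.powerset_univ]
  apply Finset.card_nbij id
  · intro S hS
    simp only [Finset.mem_filter, Finset.mem_univ, true_and, Finset.mem_coe] at hS ⊢
    exact (indep_iff E hE S).1 hS.2
  · exact Set.injOn_id _
  · intro S hS
    simp only [Finset.coe_filter, Set.mem_setOf_eq, Finset.mem_univ, true_and,
      Set.mem_image] at hS ⊢
    exact ⟨S, ⟨Finset.inter_empty S, (indep_iff E hE S).2 hS⟩, rfl⟩

lemma arithA2 (P Q a m q B C b0 cb ca : ℕ) (ha : 1 ≤ a) (hm : 1 ≤ m) (hQ : 1 ≤ Q)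
    (hq : q + 1 = 4*a) (hB : B + 1 = a) (hC : C + 1 = 2*a)
    (h1 : b0 * (P*(4*a)) ≤ (Q*q)*(2*m))
    (h2 : cb * ((P*(4*a)) * a) ≤ (Q*q)*(B*m))
    (h3 : ca * (P*(2*a)) ≤ Q*(C*m)) :
    (cb + ca + b0) * ((P*(4*a))*(4*a)) < Q*q*q*(4*m) := by
  have g1 := Nat.mul_le_mul_right (4*a) h1
  have g2 := Nat.mul_le_mul_right 4 h2
  have g3 := Nat.mul_le_mul_right (8*a) h3
  have key : (cb + ca + b0) * ((P*(4*a))*(4*a)) ≤ Q*m*(4*q*B + 8*a*C + 8*a*q) := by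
    calc (cb + ca + b0) * ((P*(4*a))*(4*a))
        = cb * ((P*(4*a))*a) * 4 + ca * (P*(2*a)) * (8*a) + b0 * (P*(4*a)) * (4*a) := by ring
      _ ≤ (Q*q)*(B*m)*4 + Q*(C*m)*(8*a) + (Q*q)*(2*m)*(4*a) :=
          Nat.add_le_add (Nat.add_le_add g2 g3) g1
      _ = Q*m*(4*q*B + 8*a*C + 8*a*q) := by ring
  apply lt_of_le_of_lt key
  have ha' : a = B + 1 := hB.symm
  subst ha'
  have hc' : C = 2*B + 1 := by omega
  subst hc'
  have hq' : q = 4*B + 3 := by omega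
  subst hq'
  calc Q*m*(4*(4*B+3)*B + 8*(B+1)*(2*B+1) + 8*(B+1)*(4*B+3))
      = Q*m*(64*(B*B) + 92*B + 32) := by ring
    _ < Q*m*(64*(B*B) + 96*B + 36) :=
        Nat.mul_lt_mul_of_pos_left (by omega) (Nat.mul_pos hQ hm)
    _ = Q*(4*B+3)*(4*B+3)*(4*m) := by ring

lemma arithA1 (a m q B C b0 cb ca : ℕ) (ha : 1 ≤ a) (hm : 1 ≤ m)
    (hq : q + 1 = 4*a) (hB : B + 1 = a) (hC : C + 1 = 2*a)
    (h1 : b0 ≤ 2*m) (h2 : cb * a ≤ B*m) (h3 : ca * (2*a) ≤ C*m) :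
    (cb + ca + b0) * (4*a) < q*(4*m) := by
  have g1 := Nat.mul_le_mul_right (4*a) h1
  have g2 := Nat.mul_le_mul_right 4 h2
  have g3 := Nat.mul_le_mul_right 2 h3
  have key : (cb + ca + b0) * (4*a) ≤ m*(4*B + 2*C + 8*a) := by
    calc (cb + ca + b0) * (4*a)
        = cb*a*4 + ca*(2*a)*2 + b0*(4*a) := by ring
      _ ≤ B*m*4 + C*m*2 + 2*m*(4*a) := Nat.add_le_add (Nat.add_le_add g2 g3) g1
      _ = m*(4*B + 2*C + 8*a) := by ring
  apply lt_of_le_of_lt key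
  have hB' : a = B + 1 := hB.symm
  subst hB'
  have hc' : C = 2*B + 1 := by omega
  subst hc'
  have hq' : q = 4*B + 3 := by omega
  subst hq'
  calc m*(4*B + 2*(2*B+1) + 8*(B+1))
      = m*(16*B + 10) := by ring
    _ < m*(16*B + 12) := Nat.mul_lt_mul_of_pos_left (by omega) hm
    _ = (4*B+3)*(4*m) := by ring

lemma caseA {n r d : ℕ} (E : Finset (Finset (Fin n))) (hd : 2 ≤ d) (hr : 1 ≤ r)
    (hn : 2 ≤ n) (hE : ∀ e ∈ E, e.card = d)
    (Hyp : ∀ T : Finset (Fin n), T.card < r → ∃ e ∈ E, Disjoint e T)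
    (e f : Finset (Fin n)) (he : e ∈ E) (hf : f ∈ E) (hef : e ≠ f)
    (hnd : ¬ Disjoint e f) :
    cnt E d ∅ ∅ * 2 ^ (r * d) < (2 ^ d - 1) ^ r * 2 ^ n := by
  classical
  obtain ⟨w, hwe, hwf⟩ := Finset.not_disjoint_iff.1 hnd
  have huex : (e \ f).Nonempty := by
    rw [Finset.sdiff_nonempty]
    intro hsub
    exact hef (Finset.eq_of_subset_of_card_le hsub (by rw [hE e he, hE f hf]))
  obtain ⟨u, hu⟩ := huex
  have hue : u ∈ e := (Finset.mem_sdiff.1 hu).1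
  have hunf : u ∉ f := (Finset.mem_sdiff.1 hu).2
  have huw : u ≠ w := fun h => hunf (h ▸ hwf)
  -- splits
  have split1 : cnt E d ∅ ∅ = cnt E d {w} {w} + cnt E d {w} ∅ :=
    cnt_split E d ∅ ∅ w (Finset.notMem_empty w) (Finset.notMem_empty w)
  have hunw : u ∉ ({w} : Finset (Fin n)) := by simp [huw]
  have split2 : cnt E d {w} {w} =
      cnt E d (insert u {w}) (insert u {w}) + cnt E d (insert u {w}) {w} :=
    cnt_split E d {w} {w} u hunw hunw
  have hRcard : (insert u ({w} : Finset (Fin n))).card = 2 := by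
    rw [Finset.card_insert_of_notMem hunw, Finset.card_singleton]
  have hRsube : insert u ({w} : Finset (Fin n)) ⊆ e :=
    Finset.insert_subset hue (Finset.singleton_subset_iff.2 hwe)
  have hsdiff1 : insert u ({w} : Finset (Fin n)) \ {w} = {u} := by
    ext x
    simp only [Finset.mem_sdiff, Finset.mem_insert, Finset.mem_singleton]
    constructor
    · rintro ⟨h1 | h1, h2⟩
      · exact h1
      · exact absurd h1 h2
    · rintro rfl
      exact ⟨Or.inl rfl, huw⟩
  -- bound for b0
  have hb0 : cnt E d {w} ∅ * 2 ^ ((r-1)*d) ≤ (2^d-1)^(r-1) * 2 ^ (n-1) := by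
    have h := lemA E d hE (r-1) {w} ∅ (Finset.empty_subset _) (fun T hT => by
      apply Hyp T
      have h1 : (({w} : Finset (Fin n)) \ ∅).card = 1 := by simp
      rw [h1] at hT
      omega)
    rwa [Finset.card_singleton] at h
  -- bound for cb
  have hcb : cnt E d (insert u {w}) (insert u {w}) * (2 ^ ((r-1)*d) * 2 ^ (d-2)) ≤
      (2^d-1)^(r-1) * ((2 ^ (d-2) - 1) * 2 ^ (n-2)) := by
    have h := inner E d (r-1) 0 (d-2) (insert u {w}) (insert u {w}) e
      Finset.Subset.rfl he (hE e he)
      (by rw [Finset.sdiff_self]; exact Finset.disjoint_empty_right _)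
      (by rw [Finset.card_sdiff_of_subset hRsube, hE e he, hRcard])
      (by rw [Finset.sdiff_self, Finset.card_empty])
      (fun R' A' hA' hcard' => lemA E d hE (r-1) R' A' hA' (fun T hT => by
        apply Hyp T
        rw [hcard'] at hT
        omega))
    rwa [hRcard] at h
  -- bound for ca
  have hca : cnt E d (insert u {w}) {w} * (2 ^ ((r-2)*d) * 2 ^ (d-1)) ≤
      (2^d-1)^(r-2) * ((2 ^ (d-1) - 1) * 2 ^ (n-2)) := by
    have hfRcard : (f \ insert u ({w} : Finset (Fin n))).card = d - 1 := by
      have hfe : f \ insert u ({w} : Finset (Fin n)) = f.erase w := by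
        ext x
        simp only [Finset.mem_sdiff, Finset.mem_insert, Finset.mem_singleton,
          Finset.mem_erase]
        constructor
        · rintro ⟨h1, h2⟩
          push_neg at h2
          exact ⟨h2.2, h1⟩
        · rintro ⟨h1, h2⟩
          refine ⟨h2, ?_⟩
          push_neg
          exact ⟨fun hxu => hunf (hxu ▸ h2), h1⟩
      rw [hfe, Finset.card_erase_of_mem hwf, hE f hf]
    have h := inner E d (r-2) 1 (d-1) (insert u {w}) {w} f
      (Finset.singleton_subset_iff.2 (Finset.mem_insert_of_mem (Finset.mem_singleton_self w)))
      hf (hE f hf)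
      (by rw [hsdiff1]; exact Finset.disjoint_singleton_right.2 hunf)
      hfRcard
      (by rw [hsdiff1, Finset.card_singleton])
      (fun R' A' hA' hcard' => by
        by_cases h2r : 2 ≤ r
        · exact lemA E d hE (r-2) R' A' hA' (fun T hT => by
            apply Hyp T
            rw [hcard'] at hT
            omega)
        · have hr2 : r - 2 = 0 := by omega
          rw [hr2]
          simpa using cnt_le E d R' A')
    rwa [hRcard] at h
  -- arithmetic setup
  have hone : (1:ℕ) ≤ 2 ^ (d-2) := Nat.one_le_two_pow
  have h2d : (2:ℕ) ^ d = 4 * 2 ^ (d-2) := by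
    conv_lhs => rw [show d = (d-2)+2 by omega]
    rw [pow_add]
    ring
  have h2d1 : (2:ℕ) ^ (d-1) = 2 * 2 ^ (d-2) := by
    conv_lhs => rw [show d-1 = (d-2)+1 by omega]
    rw [pow_add]
    ring
  have h2n : (2:ℕ) ^ n = 4 * 2 ^ (n-2) := by
    conv_lhs => rw [show n = (n-2)+2 by omega]
    rw [pow_add]
    ring
  have h2n1 : (2:ℕ) ^ (n-1) = 2 * 2 ^ (n-2) := by
    conv_lhs => rw [show n-1 = (n-2)+1 by omega]
    rw [pow_add]
    ring
  have hq : (2^d - 1) + 1 = 4 * 2 ^ (d-2) := by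
    have := Nat.one_le_two_pow (n := d)
    omega
  have hB : (2 ^ (d-2) - 1) + 1 = 2 ^ (d-2) := by omega
  have hC : (2 ^ (d-1) - 1) + 1 = 2 * 2 ^ (d-2) := by
    have := Nat.one_le_two_pow (n := d-1)
    omega
  have hm1 : (1:ℕ) ≤ 2 ^ (n-2) := Nat.one_le_two_pow
  rw [split1, split2]
  by_cases h2r : 2 ≤ r
  · obtain ⟨ρ, rfl⟩ : ∃ ρ, r = ρ + 2 := ⟨r - 2, by omega⟩
    have er1 : ρ + 2 - 1 = ρ + 1 := by omega
    have er2 : ρ + 2 - 2 = ρ := by omega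
    rw [er1] at hb0 hcb
    rw [er2] at hca
    have ep1 : (2:ℕ) ^ ((ρ+1)*d) = 2 ^ (ρ*d) * (4 * 2 ^ (d-2)) := by
      rw [show (ρ+1)*d = ρ*d + d by ring, pow_add, h2d]
    have ep2 : (2:ℕ) ^ ((ρ+2)*d) = 2 ^ (ρ*d) * (4 * 2 ^ (d-2)) * (4 * 2 ^ (d-2)) := by
      rw [show (ρ+2)*d = (ρ*d + d) + d by ring, pow_add, pow_add, h2d]
    have eq1 : ((2:ℕ)^d-1) ^ (ρ+1) = (2^d-1) ^ ρ * (2^d-1) := pow_succ _ _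
    have eq2 : ((2:ℕ)^d-1) ^ (ρ+2) = (2^d-1) ^ ρ * (2^d-1) * (2^d-1) := by
      rw [pow_succ, pow_succ]
    rw [ep1, eq1, h2n1] at hb0
    rw [ep1, eq1] at hcb
    rw [eq2, h2n, ep2]
    have goal := arithA2 (2 ^ (ρ*d)) ((2^d-1)^ρ) (2 ^ (d-2)) (2 ^ (n-2)) (2^d-1)
      (2 ^ (d-2) - 1) (2 ^ (d-1) - 1)
      (cnt E d {w} ∅) (cnt E d (insert u {w}) (insert u {w})) (cnt E d (insert u {w}) {w})
      hone hm1 (Nat.one_le_pow _ _ (by have := Nat.one_le_two_pow (n := d); omega))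
      hq hB hC
      (by calc cnt E d {w} ∅ * (2 ^ (ρ*d) * (4 * 2 ^ (d-2)))
            = cnt E d {w} ∅ * (2 ^ (ρ*d) * (4 * 2 ^ (d-2))) := rfl
          _ ≤ ((2^d-1)^ρ * (2^d-1)) * (2 * 2 ^ (n-2)) := hb0)
      (by calc cnt E d (insert u {w}) (insert u {w}) * ((2 ^ (ρ*d) * (4 * 2 ^ (d-2))) * 2 ^ (d-2))
            ≤ ((2^d-1)^ρ * (2^d-1)) * ((2 ^ (d-2) - 1) * 2 ^ (n-2)) := hcb)
      (by calc cnt E d (insert u {w}) {w} * (2 ^ (ρ*d) * (2 * 2 ^ (d-2)))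
            = cnt E d (insert u {w}) {w} * (2 ^ (ρ*d) * 2 ^ (d-1)) := by rw [h2d1]
          _ ≤ (2^d-1)^ρ * ((2 ^ (d-1) - 1) * 2 ^ (n-2)) := hca)
    calc (cnt E d (insert u {w}) (insert u {w}) + cnt E d (insert u {w}) {w} + cnt E d {w} ∅) *
          (2 ^ (ρ*d) * (4 * 2 ^ (d-2)) * (4 * 2 ^ (d-2)))
        = (cnt E d (insert u {w}) (insert u {w}) + cnt E d (insert u {w}) {w} + cnt E d {w} ∅) *
          ((2 ^ (ρ*d) * (4 * 2 ^ (d-2))) * (4 * 2 ^ (d-2))) := by ring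
      _ < (2^d-1)^ρ * (2^d-1) * (2^d-1) * (4 * 2 ^ (n-2)) := goal
  · have hr1 : r = 1 := by omega
    subst hr1
    simp only [Nat.sub_self, pow_zero, one_mul, Nat.zero_mul, zero_mul, mul_one] at hb0 hcb hca
    have hca' : cnt E d (insert u {w}) {w} * (2 * 2 ^ (d-2)) ≤ (2 ^ (d-1) - 1) * 2 ^ (n-2) := by
      calc cnt E d (insert u {w}) {w} * (2 * 2 ^ (d-2))
          = cnt E d (insert u {w}) {w} * 2 ^ (d-1) := by rw [h2d1]
        _ ≤ (2 ^ (d-1) - 1) * 2 ^ (n-2) := by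
            have h := hca
            simpa using h
    have hcb' : cnt E d (insert u {w}) (insert u {w}) * 2 ^ (d-2) ≤ (2 ^ (d-2) - 1) * 2 ^ (n-2) := by
      simpa using hcb
    have hb0' : cnt E d {w} ∅ ≤ 2 * 2 ^ (n-2) := by
      rw [← h2n1]
      simpa using hb0
    have goal := arithA1 (2 ^ (d-2)) (2 ^ (n-2)) (2^d-1) (2 ^ (d-2) - 1) (2 ^ (d-1) - 1)
      (cnt E d {w} ∅) (cnt E d (insert u {w}) (insert u {w})) (cnt E d (insert u {w}) {w})
      hone hm1 hq hB hC hb0' hcb' hca'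
    calc (cnt E d (insert u {w}) (insert u {w}) + cnt E d (insert u {w}) {w} + cnt E d {w} ∅) *
          2 ^ (1*d)
        = (cnt E d (insert u {w}) (insert u {w}) + cnt E d (insert u {w}) {w} + cnt E d {w} ∅) *
          (4 * 2 ^ (d-2)) := by rw [one_mul, h2d]
      _ < (2^d-1) * (4 * 2 ^ (n-2)) := goal
      _ = (2^d-1)^1 * 2 ^ n := by rw [pow_one, h2n]

lemma caseB_arith (n r c d : ℕ) (hd : 1 ≤ d) (hrc : r < c) (hcd : c * d ≤ n) :
    (2^d - 1)^c * 2^(n - c*d) < (2^d - 1)^r * 2^(n - r*d) := by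
  have h2d : (1:ℕ) ≤ 2^d := Nat.one_le_two_pow
  have h2d2 : (2:ℕ) ≤ 2^d := by
    calc (2:ℕ) = 2^1 := rfl
      _ ≤ 2^d := Nat.pow_le_pow_right (by omega) hd
  have hrd : r * d ≤ c * d := Nat.mul_le_mul_right d (le_of_lt hrc)
  have key : (2^d - 1)^c * 2^(n - c*d) * 2^(c*d) < (2^d - 1)^r * 2^(n - r*d) * 2^(c*d) := by
    have e1 : (2^d - 1)^c * 2^(n-c*d) * 2^(c*d) = (2^d-1)^c * 2^n := by
      rw [mul_assoc, ← pow_add, Nat.sub_add_cancel hcd]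
    have hexp : (n - r*d) + c*d = n + (c-r)*d := by
      have e3 : (c-r)*d = c*d - r*d := by rw [Nat.sub_mul]
      omega
    have e2 : (2^d - 1)^r * 2^(n-r*d) * 2^(c*d) = (2^d-1)^r * 2^n * 2^((c-r)*d) := by
      rw [mul_assoc, ← pow_add, hexp, pow_add, ← mul_assoc]
    rw [e1, e2]
    have hsplit : (2^d - 1)^c = (2^d-1)^r * (2^d-1)^(c-r) := by
      rw [← pow_add]
      congr 1
      omega
    rw [hsplit]
    have hpow : ((2:ℕ)^d - 1)^(c-r) < 2^((c-r)*d) := by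
      calc ((2:ℕ)^d - 1)^(c-r) < (2^d)^(c-r) :=
            Nat.pow_lt_pow_left (by omega) (by omega)
        _ = 2^((c-r)*d) := by rw [← pow_mul, Nat.mul_comm]
    calc (2^d-1)^r * (2^d-1)^(c-r) * 2^n
        = (2^d-1)^(c-r) * ((2^d-1)^r * 2^n) := by ring
      _ < 2^((c-r)*d) * ((2^d-1)^r * 2^n) := by
          have h1 : (1:ℕ) ≤ (2^d-1)^r := Nat.one_le_pow _ _ (by omega)
          have h2 : (1:ℕ) ≤ 2^n := Nat.one_le_two_pow
          exact Nat.mul_lt_mul_of_pos_right hpow (Nat.mul_pos h1 h2)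
      _ = (2^d-1)^r * 2^n * 2^((c-r)*d) := by ring
  exact lt_of_mul_lt_mul_right key (Nat.zero_le _)

lemma numIndep_of_disj {n d : ℕ} (E : Finset (Finset (Fin n)))
    (hE : ∀ e ∈ E, e.card = d) (hdisj : ∀ e ∈ E, ∀ f ∈ E, e ≠ f → Disjoint e f) :
    numIndep E d = (2^d - 1)^E.card * 2^(n - E.card * d) := by
  rw [numIndep_eq_cnt, cnt_eq_prod E hE,
    cntC d E Finset.univ hE hdisj (fun e _ => Finset.subset_univ e)]
  rw [Finset.card_univ, Fintype.card_fin]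

lemma exists_extremal (n r d : ℕ) (hd : 2 ≤ d) (hr : 1 ≤ r) (hrd : r * d ≤ n) :
    ∃ E : Finset (Finset (Fin n)), (∀ e ∈ E, e.card = d) ∧
      (¬ ∃ T : Finset (Fin n), T.card = r - 1 ∧ IsTransversal E T) ∧
      E.card = r ∧ (∀ e ∈ E, ∀ f ∈ E, e ≠ f → Disjoint e f) := by
  classical
  have hnpos : 0 < n := by nlinarith
  set F : ℕ → Finset (Fin n) :=
    fun i => (Finset.range d).image (fun j => (⟨(i*d+j) % n, Nat.mod_lt _ hnpos⟩ : Fin n))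
    with hF
  have hlt : ∀ i < r, ∀ j < d, i*d + j < n := by
    intro i hi j hj
    have h1 : (i+1) * d ≤ r * d := Nat.mul_le_mul_right d (by omega)
    have h2 : (i+1) * d = i*d + d := by ring
    omega
  have hmem : ∀ i < r, ∀ x : Fin n, x ∈ F i ↔ ∃ j < d, (x:ℕ) = i*d + j := by
    intro i hi x
    rw [hF]
    simp only [Finset.mem_image, Finset.mem_range]
    constructor
    · rintro ⟨j, hj, rfl⟩
      exact ⟨j, hj, by simp [Nat.mod_eq_of_lt (hlt i hi j hj)]⟩
    · rintro ⟨j, hj, hx⟩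
      refine ⟨j, hj, ?_⟩
      apply Fin.ext
      simp [Nat.mod_eq_of_lt (hlt i hi j hj), hx]
  have hcard : ∀ i < r, (F i).card = d := by
    intro i hi
    rw [hF]
    rw [Finset.card_image_of_injOn, Finset.card_range]
    intro j1 hj1 j2 hj2 heq
    simp only [Finset.mem_coe, Finset.mem_range] at hj1 hj2
    have := congrArg Fin.val heq
    simp only [Nat.mod_eq_of_lt (hlt i hi j1 hj1), Nat.mod_eq_of_lt (hlt i hi j2 hj2)] at this
    omega
  have hdisjF : ∀ i < r, ∀ i' < r, i ≠ i' → Disjoint (F i) (F i') := by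
    intro i hi i' hi' hne
    rw [Finset.disjoint_left]
    intro x hx hx'
    obtain ⟨j, hj, hxe⟩ := (hmem i hi x).1 hx
    obtain ⟨j', hj', hxe'⟩ := (hmem i' hi' x).1 hx'
    rcases Nat.lt_or_ge i i' with h | h
    · have h1 : (i+1)*d ≤ i'*d := Nat.mul_le_mul_right d (by omega)
      have h2 : (i+1)*d = i*d + d := by ring
      omega
    · have hii : i' < i := by omega
      have h1 : (i'+1)*d ≤ i*d := Nat.mul_le_mul_right d (by omega)
      have h2 : (i'+1)*d = i'*d + d := by ring
      omega
  have hFne : ∀ i < r, (F i).Nonempty := by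
    intro i hi
    rw [← Finset.card_pos, hcard i hi]
    omega
  have hFinj : ∀ i < r, ∀ i' < r, F i = F i' → i = i' := by
    intro i hi i' hi' heq
    by_contra hne
    obtain ⟨x, hx⟩ := hFne i hi
    exact Finset.disjoint_left.1 (hdisjF i hi i' hi' hne) hx (heq ▸ hx)
  refine ⟨(Finset.range r).image F, ?_, ?_, ?_, ?_⟩
  · intro e he
    obtain ⟨i, hi, rfl⟩ := Finset.mem_image.1 he
    exact hcard i (Finset.mem_range.1 hi)
  · rintro ⟨T, hT, htrans⟩
    have hle : r ≤ T.card := by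
      have := Finset.card_le_card_of_injOn
        (f := fun i => if h : ((F i) ∩ T).Nonempty then ((F i) ∩ T).min' h else ⟨0, hnpos⟩)
        (s := Finset.range r) (t := T) ?_ ?_
      · rwa [Finset.card_range] at this
      · intro i hi
        have hne : ((F i) ∩ T).Nonempty := htrans (F i) (Finset.mem_image_of_mem F hi)
        simp only [hne, dif_pos]
        exact (Finset.mem_inter.1 (Finset.min'_mem _ hne)).2
      · intro i hi i' hi' heq
        simp only [Finset.mem_coe, Finset.mem_range] at hi hi'
        have hne : ((F i) ∩ T).Nonempty := htrans (F i)
          (Finset.mem_image_of_mem F (Finset.mem_range.2 hi))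
        have hne' : ((F i') ∩ T).Nonempty := htrans (F i')
          (Finset.mem_image_of_mem F (Finset.mem_range.2 hi'))
        simp only [hne, hne', dif_pos] at heq
        by_contra hii
        apply Finset.disjoint_left.1 (hdisjF i hi i' hi' hii)
          (Finset.mem_inter.1 (Finset.min'_mem _ hne)).1
        rw [heq]
        exact (Finset.mem_inter.1 (Finset.min'_mem _ hne')).1
    omega
  · rw [Finset.card_image_of_injOn, Finset.card_range]
    intro i hi i' hi' heq
    simp only [Finset.mem_coe, Finset.mem_range] at hi hi'
    exact hFinj i hi i' hi' heq
  · intro e he g hg hne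
    obtain ⟨i, hi, rfl⟩ := Finset.mem_image.1 he
    obtain ⟨i', hi', rfl⟩ := Finset.mem_image.1 hg
    exact hdisjF i (Finset.mem_range.1 hi) i' (Finset.mem_range.1 hi')
      (fun h => hne (by rw [h]))

theorem stmt_4 (n r d : ℕ) (hd : 2 ≤ d) (hr : 1 ≤ r) (hrd : r * d ≤ n) :
    (∀ E : Finset (Finset (Fin n)), (∀ e ∈ E, e.card = d) →
      (¬ ∃ T : Finset (Fin n), T.card = r - 1 ∧ IsTransversal E T) →
      numIndep E d ≤ 2 ^ (n - r * d) * (2 ^ d - 1) ^ r ∧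
        (numIndep E d = 2 ^ (n - r * d) * (2 ^ d - 1) ^ r ↔
          E.card = r ∧ ∀ e ∈ E, ∀ f ∈ E, e ≠ f → Disjoint e f)) ∧
    iMax n r d = 2 ^ (n - r * d) * (2 ^ d - 1) ^ r := by
  unfold iMax
  have hrn : r ≤ n := le_trans (Nat.le_mul_of_pos_right r (by omega)) hrd
  have hn2 : 2 ≤ n := le_trans (Nat.mul_le_mul hr hd) hrd
  have hpow_pos : 0 < 2 ^ (r * d) := Nat.pow_pos (by omega)
  have hMmul : (2 ^ (n - r * d) * (2 ^ d - 1) ^ r) * 2 ^ (r * d) = (2 ^ d - 1) ^ r * 2 ^ n := by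
    calc (2 ^ (n - r * d) * (2 ^ d - 1) ^ r) * 2 ^ (r * d)
        = (2 ^ d - 1) ^ r * (2 ^ (n - r * d) * 2 ^ (r * d)) := by ring
      _ = (2 ^ d - 1) ^ r * 2 ^ n := by rw [← pow_add, Nat.sub_add_cancel hrd]
  have main : ∀ E : Finset (Finset (Fin n)), (∀ e ∈ E, e.card = d) →
      (¬ ∃ T : Finset (Fin n), T.card = r - 1 ∧ IsTransversal E T) →
      numIndep E d ≤ 2 ^ (n - r * d) * (2 ^ d - 1) ^ r ∧
        (numIndep E d = 2 ^ (n - r * d) * (2 ^ d - 1) ^ r ↔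
          E.card = r ∧ ∀ e ∈ E, ∀ f ∈ E, e ≠ f → Disjoint e f) := by
    intro E hE hnt
    have Hyp : ∀ T : Finset (Fin n), T.card < r → ∃ e ∈ E, Disjoint e T :=
      notrans_hyp E hr (by omega) hnt
    have hub : numIndep E d * 2 ^ (r * d) ≤ (2 ^ d - 1) ^ r * 2 ^ n := by
      have h := lemA E d hE r ∅ ∅ Finset.Subset.rfl (fun T hT => Hyp T (by simpa using hT))
      rw [numIndep_eq_cnt]
      simpa using h
    have hUB : numIndep E d ≤ 2 ^ (n - r * d) * (2 ^ d - 1) ^ r := by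
      apply Nat.le_of_mul_le_mul_right _ hpow_pos
      rw [hMmul]
      exact hub
    refine ⟨hUB, ?_, ?_⟩
    · intro heq
      by_contra hne
      have hlt : numIndep E d < 2 ^ (n - r * d) * (2 ^ d - 1) ^ r := by
        by_cases hdisj : ∀ e ∈ E, ∀ f ∈ E, e ≠ f → Disjoint e f
        · have hcard : E.card ≠ r := fun h => hne ⟨h, hdisj⟩
          have hge : r ≤ E.card := notrans_card E (by omega) hr (by omega) hE hnt
          have hlt2 : r < E.card := lt_of_le_of_ne hge (Ne.symm hcard)
          rw [numIndep_of_disj E hE hdisj, mul_comm (2 ^ (n - r * d))]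
          exact caseB_arith n r E.card d (by omega) hlt2 (disj_mul_le E hE hdisj)
        · push_neg at hdisj
          obtain ⟨e, he, f, hf, hef, hnd⟩ := hdisj
          have hstrict := caseA E hd hr hn2 hE Hyp e f he hf hef hnd
          rw [← numIndep_eq_cnt] at hstrict
          have h2 : numIndep E d * 2 ^ (r * d) <
              (2 ^ (n - r * d) * (2 ^ d - 1) ^ r) * 2 ^ (r * d) := by
            rw [hMmul]
            exact hstrict
          exact lt_of_mul_lt_mul_right h2 (Nat.zero_le _)
      exact absurd heq (ne_of_lt hlt)
    · rintro ⟨hcard, hdisj⟩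
      rw [numIndep_of_disj E hE hdisj, hcard, mul_comm]
  refine ⟨main, ?_⟩
  obtain ⟨E0, hE0, hnt0, hcard0, hdisj0⟩ := exists_extremal n r d hd hr hrd
  have hval0 : numIndep E0 d = 2 ^ (n - r * d) * (2 ^ d - 1) ^ r :=
    (main E0 hE0 hnt0).2.2 ⟨hcard0, hdisj0⟩
  apply le_antisymm
  · apply csSup_le
    · exact ⟨numIndep E0 d, E0, hE0, hnt0, rfl⟩
    · rintro x ⟨E, hE, hnt, rfl⟩
      exact (main E hE hnt).1
  · apply le_csSup
    · refine ⟨2 ^ (n - r * d) * (2 ^ d - 1) ^ r, ?_⟩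
      rintro x ⟨E, hE, hnt, rfl⟩
      exact (main E hE hnt).1
    · exact ⟨E0, hE0, hnt0, hval0⟩
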